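/- Let A be an n×n quaternion matrix with group inverse X and Moore–Penrose inverse Y, and set Z := X·A·Y and Z' := Y·A·X. Then A²·Y is a Moore–Penrose inverse of Z, i.e. Z(A²Y)Z = Z, (A²Y)Z(A²Y) = A²Y, (Z·A²Y)* = Z·A²Y and ((A²Y)·Z)* = (A²Y)·Z; likewise Y·A² is a Moore–Penrose inverse of Z'. (In the paper's notation: (A^⊕)† = A P_A and (A_⊕)† = Q_A A.) -/
import Mathlib


/-- `A²·Y` is a Moore–Penrose inverse of the right core inverse `Z = X·A·Y`,
and `Y·A²` is a Moore–Penrose inverse of the left core inverse `Z' = Y·A·X`. -/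
theorem mp_of_core_inverses {n : ℕ}
    (A X Y : Matrix (Fin n) (Fin n) (Quaternion ℝ))
    (hX1 : A * X * A = A) (hX2 : X * A * X = X) (hX3 : A * X = X * A)
    (hY1 : A * Y * A = A) (hY2 : Y * A * Y = Y)
    (hY3 : (A * Y).conjTranspose = A * Y) (hY4 : (Y * A).conjTranspose = Y * A) :
    ((X * A * Y) * (A ^ 2 * Y) * (X * A * Y) = X * A * Y ∧
     (A ^ 2 * Y) * (X * A * Y) * (A ^ 2 * Y) = A ^ 2 * Y ∧
     ((X * A * Y) * (A ^ 2 * Y)).conjTranspose = (X * A * Y) * (A ^ 2 * Y) ∧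
     ((A ^ 2 * Y) * (X * A * Y)).conjTranspose = (A ^ 2 * Y) * (X * A * Y)) ∧
    ((Y * A * X) * (Y * A ^ 2) * (Y * A * X) = Y * A * X ∧
     (Y * A ^ 2) * (Y * A * X) * (Y * A ^ 2) = Y * A ^ 2 ∧
     ((Y * A * X) * (Y * A ^ 2)).conjTranspose = (Y * A * X) * (Y * A ^ 2) ∧
     ((Y * A ^ 2) * (Y * A * X)).conjTranspose = (Y * A ^ 2) * (Y * A * X)) := by
  have L1 : (X * A * Y) * (A ^ 2 * Y) = A * Y := by
    calc (X * A * Y) * (A ^ 2 * Y) = X * (A * Y * A) * A * Y := by noncomm_ring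
      _ = X * A * A * Y := by rw [hY1]
      _ = A * X * A * Y := by rw [← hX3]
      _ = A * Y := by rw [hX1]
  have L2 : (A ^ 2 * Y) * (X * A * Y) = A * Y := by
    calc (A ^ 2 * Y) * (X * A * Y) = A * (A * Y) * (X * A) * Y := by noncomm_ring
      _ = A * (A * Y) * (A * X) * Y := by rw [← hX3]
      _ = A * (A * Y * A) * X * Y := by noncomm_ring
      _ = A * A * X * Y := by rw [hY1]
      _ = A * (A * X) * Y := by noncomm_ring
      _ = A * (X * A) * Y := by rw [hX3]
      _ = A * X * A * Y := by noncomm_ring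
      _ = A * Y := by rw [hX1]
  have L3 : (A * Y) * (X * A * Y) = X * A * Y := by
    calc (A * Y) * (X * A * Y) = A * Y * (X * A) * Y := by noncomm_ring
      _ = A * Y * (A * X) * Y := by rw [← hX3]
      _ = (A * Y * A) * X * Y := by noncomm_ring
      _ = A * X * Y := by rw [hY1]
      _ = X * A * Y := by rw [hX3]
  have L4 : (A * Y) * (A ^ 2 * Y) = A ^ 2 * Y := by
    calc (A * Y) * (A ^ 2 * Y) = (A * Y * A) * (A * Y) := by noncomm_ring
      _ = A * (A * Y) := by rw [hY1]
      _ = A ^ 2 * Y := by noncomm_ring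
  have M1 : (Y * A * X) * (Y * A ^ 2) = Y * A := by
    calc (Y * A * X) * (Y * A ^ 2) = Y * (A * X) * (Y * A) * A := by noncomm_ring
      _ = Y * (X * A) * (Y * A) * A := by rw [hX3]
      _ = Y * X * (A * Y * A) * A := by noncomm_ring
      _ = Y * X * A * A := by rw [hY1]
      _ = Y * (X * A) * A := by noncomm_ring
      _ = Y * (A * X) * A := by rw [← hX3]
      _ = Y * (A * X * A) := by noncomm_ring
      _ = Y * A := by rw [hX1]
  have M2 : (Y * A ^ 2) * (Y * A * X) = Y * A := by
    calc (Y * A ^ 2) * (Y * A * X) = Y * A * (A * Y * A) * X := by noncomm_ring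
      _ = Y * A * A * X := by rw [hY1]
      _ = Y * A * (A * X) := by noncomm_ring
      _ = Y * A * (X * A) := by rw [hX3]
      _ = Y * (A * X * A) := by noncomm_ring
      _ = Y * A := by rw [hX1]
  have M3 : (Y * A) * (Y * A * X) = Y * A * X := by
    calc (Y * A) * (Y * A * X) = (Y * A * Y) * (A * X) := by noncomm_ring
      _ = Y * (A * X) := by rw [hY2]
      _ = Y * A * X := by noncomm_ring
  have M4 : (Y * A) * (Y * A ^ 2) = Y * A ^ 2 := by
    calc (Y * A) * (Y * A ^ 2) = (Y * A * Y) * A ^ 2 := by noncomm_ring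
      _ = Y * A ^ 2 := by rw [hY2]
  refine ⟨⟨?_, ?_, ?_, ?_⟩, ?_, ?_, ?_, ?_⟩
  · rw [L1, L3]
  · rw [L2, L4]
  · rw [L1, hY3]
  · rw [L2, hY3]
  · rw [M1, M3]
  · rw [M2, M4]
  · rw [M1, hY4]
  · rw [M2, hY4]
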